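/- Let u_α minimize u ↦ ½‖Tu − v^δ‖² + α·(J(u) − J(u⁰) − ⟨q⁰, u − u⁰⟩) over a convex set Ω containing u†, where q⁰ ∈ ∂J(u⁰) satisfies ⟨q⁰, u_α − u†⟩ = 0 (e.g., q⁰ = 0 for constant initial guess). Assume ‖T u† − v^δ‖ ≤ δ, the variational inequality J(u†) − J(u) ≤ Ψ(‖Tu − Tu†‖) for all u, the discrepancy bounds τ̲·δ ≤ ‖T u_α − v^δ‖ and ‖T u_α − T u†‖ ≤ (τ̄+1)δ with 1 < τ̲ ≤ τ̄, and Ψ concave increasing with Ψ(0)=0. Then δ²/(2α) ≤ Ψ(δ)/(τ̲ − 1). -/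

import Mathlib

/-- Lemma (lower bound for the regularization parameter): under a variational
source condition and Morozov's discrepancy principle, `δ²/(2α) ≤ Ψ(δ)/(τ̲-1)`. -/
theorem stmt_10 {N M : ℕ}
    (T : EuclideanSpace ℝ (Fin N) →L[ℝ] EuclideanSpace ℝ (Fin M))
    (J : EuclideanSpace ℝ (Fin N) → ℝ)
    (Ω : Set (EuclideanSpace ℝ (Fin N))) (hΩ : Convex ℝ Ω)
    (uα udag u0 q0 : EuclideanSpace ℝ (Fin N))
    (vδ : EuclideanSpace ℝ (Fin M))
    (α δ τlo τhi : ℝ) (Ψ : ℝ → ℝ)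
    (hα : 0 < α) (hδ : 0 ≤ δ)
    (hτlo : 1 < τlo) (hττ : τlo ≤ τhi)
    (hΨconc : ConcaveOn ℝ (Set.Ici (0 : ℝ)) Ψ)
    (hΨmono : MonotoneOn Ψ (Set.Ici (0 : ℝ)))
    (hΨ0 : Ψ 0 = 0)
    (hudag : udag ∈ Ω) (huα : uα ∈ Ω)
    (hq0sub : ∀ x, J x - J u0 ≥ (inner ℝ q0 (x - u0) : ℝ))
    (hq0 : (inner ℝ q0 (uα - udag) : ℝ) = 0)
    (hmin : ∀ u ∈ Ω,
      (1 / 2) * ‖T uα - vδ‖ ^ 2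
          + α * (J uα - J u0 - (inner ℝ q0 (uα - u0) : ℝ)) ≤
        (1 / 2) * ‖T u - vδ‖ ^ 2
          + α * (J u - J u0 - (inner ℝ q0 (u - u0) : ℝ)))
    (hnoise : ‖T udag - vδ‖ ≤ δ)
    (hVSC : ∀ u, J udag - J u ≤ Ψ ‖T u - T udag‖)
    (hdisc_lo : τlo * δ ≤ ‖T uα - vδ‖)
    (hdisc_hi : ‖T uα - T udag‖ ≤ (τhi + 1) * δ) :
    δ ^ 2 / (2 * α) ≤ Ψ δ / (τlo - 1) := by

  -- abbreviate the residual
  set r : ℝ := ‖T uα - vδ‖ with hr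
  have hr0 : 0 ≤ r := norm_nonneg _
  -- basic inequality from minimality at udag
  have hkey : (1/2) * r ^ 2 ≤ (1/2) * δ ^ 2 + α * (J udag - J uα) := by
    have h := hmin udag hudag
    have hip : (inner ℝ q0 (udag - u0) : ℝ) - (inner ℝ q0 (uα - u0) : ℝ)
        = -(inner ℝ q0 (uα - udag) : ℝ) := by
      rw [inner_sub_right, inner_sub_right, inner_sub_right]; ring
    have hnorm : (1/2) * ‖T udag - vδ‖ ^ 2 ≤ (1/2) * δ ^ 2 := by
      have := sq_le_sq' (by linarith [norm_nonneg (T udag - vδ)]) hnoise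
      nlinarith
    have hBA : (inner ℝ q0 (udag - u0) : ℝ) = (inner ℝ q0 (uα - u0) : ℝ) := by
      linarith [hip, hq0]
    rw [hBA] at h
    linarith [h, hnorm]
  -- VSC and monotonicity
  have hle : ‖T uα - T udag‖ ≤ r + δ := by
    calc ‖T uα - T udag‖ ≤ ‖T uα - vδ‖ + ‖T udag - vδ‖ := by
          have := norm_sub_le_norm_sub_add_norm_sub (T uα) vδ (T udag)
          simpa [norm_sub_rev] using this
      _ ≤ r + δ := by rw [← hr]; linarith
  have hJ : J udag - J uα ≤ Ψ (r + δ) := by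
    refine (hVSC uα).trans (hΨmono (Set.mem_Ici.2 (norm_nonneg _))
      (Set.mem_Ici.2 (by positivity)) hle)
  rcases eq_or_lt_of_le hδ with hδ0 | hδpos
  · have : δ = 0 := hδ0.symm
    simp [this, hΨ0]
  -- concavity: Ψ (r+δ) ≤ ((r+δ)/δ) * Ψ δ
  have hrδ : 0 < r + δ := by linarith
  have hconc : (δ / (r + δ)) * Ψ (r + δ) ≤ Ψ δ := by
    have ha : (0:ℝ) ≤ 1 - δ / (r + δ) := by
      have : δ / (r + δ) ≤ 1 := by
        rw [div_le_one hrδ]; linarith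
      linarith
    have hb : (0:ℝ) ≤ δ / (r + δ) := by positivity
    have hcomb := hΨconc.2 (Set.mem_Ici.2 le_rfl)
      (Set.mem_Ici.2 hrδ.le) ha hb (by ring)
    have hx : (1 - δ / (r + δ)) • (0:ℝ) + (δ / (r + δ)) • (r + δ) = δ := by
      rw [smul_zero, zero_add, smul_eq_mul, div_mul_cancel₀ _ hrδ.ne']
    rw [hx] at hcomb
    simpa [hΨ0, smul_eq_mul] using hcomb
  -- combine: (r - δ)/2 ≤ α * Ψ δ / δ
  have hΨconcle : Ψ (r + δ) ≤ ((r + δ) / δ) * Ψ δ := by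
    have h1 : (0:ℝ) < δ / (r + δ) := by positivity
    rw [div_mul_eq_mul_div, le_div_iff₀ hδpos]
    have := mul_le_mul_of_nonneg_left hconc hrδ.le
    calc Ψ (r + δ) * δ = (r + δ) * ((δ / (r + δ)) * Ψ (r + δ)) := by
          field_simp
      _ ≤ (r + δ) * Ψ δ := mul_le_mul_of_nonneg_left hconc hrδ.le
  have hmain : (1/2) * (r ^ 2 - δ ^ 2) ≤ α * ((r + δ) / δ) * Ψ δ := by
    nlinarith [hkey, hJ, hΨconcle, hα]
  -- r ≥ τlo * δ
  have hrlo : τlo * δ ≤ r := by rw [hr]; exact hdisc_lo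
  -- conclude
  have hfinal : (τlo - 1) * δ ^ 2 ≤ 2 * α * Ψ δ := by
    have h2 : (1/2) * (r - δ) * (r + δ) ≤ α * ((r + δ) / δ) * Ψ δ := by
      nlinarith [hmain]
    have h3 : α * ((r + δ) / δ) * Ψ δ = (r + δ) * (α * Ψ δ / δ) := by
      field_simp
    rw [h3] at h2
    have h4 : (1/2) * (r - δ) ≤ α * Ψ δ / δ :=
      le_of_mul_le_mul_right (by linarith [h2, mul_comm (r + δ) (α * Ψ δ / δ)]) hrδ
    have h5 : (1/2) * (r - δ) * δ ≤ α * Ψ δ := by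
      have h6 := mul_le_mul_of_nonneg_right h4 hδpos.le
      have h7 : α * Ψ δ / δ * δ = α * Ψ δ := by field_simp
      linarith
    have h8 : (τlo * δ - δ) * δ ≤ (r - δ) * δ :=
      mul_le_mul_of_nonneg_right (by linarith) hδ
    linarith [h8, h5]
  rw [div_le_div_iff₀ (by positivity) (by linarith)]
  linarith [hfinal]
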